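/- Let K be a finite field, n a positive integer, and f : K^n → K^n a map whose dependency graph is acyclic. Then the n-fold iterate f^n is a constant map: there exists x₀ ∈ K^n such that f^n(x) = x₀ for all x ∈ K^n. -/

import Mathlib

/-- The coordinate function `h : K^n → K` depends on variable `x_j`. -/
def DepOnVar {n : ℕ} {K : Type*} (h : (Fin n → K) → K) (j : Fin n) : Prop :=
  ∃ (x : Fin n → K) (p q : K), p ≠ q ∧
    h (Function.update x j p) ≠ h (Function.update x j q)

/-- Edge from `j` to `i` in the dependency graph of `f`. -/
def DepEdge {n : ℕ} {K : Type*} (f : (Fin n → K) → (Fin n → K)) (j i : Fin n) : Prop :=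
  DepOnVar (fun x => f x i) j

/-- The dependency graph of `f` is acyclic (no directed cycles, no self-loops). -/
def DepAcyclic {n : ℕ} {K : Type*} (f : (Fin n → K) → (Fin n → K)) : Prop :=
  ¬ ∃ (m : ℕ) (v : ℕ → Fin n), 1 ≤ m ∧ v 0 = v m ∧
      ∀ t < m, DepEdge f (v t) (v (t + 1))

lemma not_dependsOn_eq {n : ℕ} {K : Type*} {h : (Fin n → K) → K} {j : Fin n}
    (hd : ¬ DepOnVar h j) (x : Fin n → K) (p q : K) :
    h (Function.update x j p) = h (Function.update x j q) := by
  by_cases hpq : p = q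
  · rw [hpq]
  · by_contra hne
    exact hd ⟨x, p, q, hpq, hne⟩

/-- If `x` and `y` agree on all coordinates on which `h` depends, then `h x = h y`. -/
lemma indep_eq {n : ℕ} {K : Type*} (h : (Fin n → K) → K) :
    ∀ (s : Finset (Fin n)) (x y : Fin n → K),
      (∀ j, x j ≠ y j → j ∈ s) →
      (∀ j, x j ≠ y j → ¬ DepOnVar h j) → h x = h y := by
  classical
  intro s
  induction s using Finset.induction_on with
  | empty =>
    intro x y hcov _
    have : x = y := funext fun j => by
      by_contra hj
      exact absurd (hcov j hj) (Finset.notMem_empty _)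
    rw [this]
  | @insert a s' ha ih =>
    intro x y hcov hdep
    set y' := Function.update y a (x a) with hy'
    have hyy : h y' = h y := by
      have h1 : h (Function.update y a (x a)) = h (Function.update y a (y a)) := by
        by_cases hxa : x a = y a
        · rw [hxa]
        · exact not_dependsOn_eq (hdep a hxa) y (x a) (y a)
      rw [hy', h1, Function.update_eq_self]
    have hxy' : h x = h y' := by
      apply ih x y'
      · intro j hj
        have hja : j ≠ a := by
          intro hja
          apply hj
          rw [hja, hy', Function.update_self]
        have : y' j = y j := by rw [hy', Function.update_of_ne hja]
        have := hcov j (by rw [← this]; exact hj)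
        rcases Finset.mem_insert.1 this with h' | h'
        · exact absurd h' hja
        · exact h'
      · intro j hj
        have hja : j ≠ a := by
          intro hja
          apply hj
          rw [hja, hy', Function.update_self]
        have : y' j = y j := by rw [hy', Function.update_of_ne hja]
        exact hdep j (by rw [← this]; exact hj)
    rw [hxy', hyy]

/-- There exists a directed path of length `k` in the dependency graph ending at `i`. -/
def HasPath {n : ℕ} {K : Type*} (f : (Fin n → K) → (Fin n → K)) (k : ℕ) (i : Fin n) : Prop :=
  ∃ v : ℕ → Fin n, v k = i ∧ ∀ t < k, DepEdge f (v t) (v (t + 1))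

lemma iterate_eq_of_noPath {n : ℕ} {K : Type*} (f : (Fin n → K) → (Fin n → K)) :
    ∀ (k : ℕ) (i : Fin n), ¬ HasPath f k i → ∀ x y, (f^[k]) x i = (f^[k]) y i := by
  intro k
  induction k with
  | zero =>
    intro i hp
    exact absurd ⟨fun _ => i, rfl, fun t ht => absurd ht (Nat.not_lt_zero t)⟩ hp
  | succ k ih =>
    intro i hp x y
    rw [Function.iterate_succ_apply', Function.iterate_succ_apply']
    apply indep_eq (fun z => f z i) Finset.univ _ _ (fun j _ => Finset.mem_univ j)
    intro j hj hdep
    apply hj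
    apply ih j
    intro ⟨v, hvk, hedge⟩
    apply hp
    refine ⟨fun t => if t = k + 1 then i else v t, by simp, ?_⟩
    intro t ht
    simp only
    by_cases htk : t = k
    · rw [if_neg (show t ≠ k + 1 by omega), if_pos (show t + 1 = k + 1 by omega),
        htk, hvk]
      exact hdep
    · rw [if_neg (show t ≠ k + 1 by omega), if_neg (show t + 1 ≠ k + 1 by omega)]
      exact hedge t (by omega)

lemma noPath_of_acyclic {n : ℕ} {K : Type*} {f : (Fin n → K) → (Fin n → K)}
    (hf : DepAcyclic f) (i : Fin n) : ¬ HasPath f n i := by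
  rintro ⟨v, -, hedge⟩
  obtain ⟨a, b, hab, heq⟩ :
      ∃ a b : Fin (n + 1), a ≠ b ∧ v (a : ℕ) = v (b : ℕ) := by
    have := Fintype.exists_ne_map_eq_of_card_lt (fun t : Fin (n + 1) => v (t : ℕ))
      (by simp)
    obtain ⟨a, b, hab, heq⟩ := this
    exact ⟨a, b, hab, heq⟩
  -- WLOG a < b
  wlog hlt : (a : ℕ) < (b : ℕ) generalizing a b
  · exact this b a hab.symm heq.symm (by
      have : (a : ℕ) ≠ (b : ℕ) := fun h => hab (Fin.ext h)
      omega)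
  apply hf
  refine ⟨(b : ℕ) - (a : ℕ), fun t => v ((a : ℕ) + t), by omega, ?_, ?_⟩
  · show v ((a : ℕ) + 0) = v ((a : ℕ) + ((b : ℕ) - (a : ℕ)))
    rw [Nat.add_zero, Nat.add_sub_cancel' hlt.le]
    exact heq
  · intro t ht
    have hb : (b : ℕ) ≤ n := by omega
    exact hedge ((a : ℕ) + t) (by omega)

/-- If `f : K^n → K^n` has an acyclic dependency graph, then the `n`-fold
iterate `f^n` is a constant map. -/
theorem iterate_const_of_acyclic {K : Type*} [Field K] [Fintype K] {n : ℕ}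
    (hn : 0 < n) (f : (Fin n → K) → (Fin n → K)) (hf : DepAcyclic f) :
    ∃ x₀ : Fin n → K, ∀ x : Fin n → K, (f^[n]) x = x₀ := by
  refine ⟨(f^[n]) (fun _ => 0), fun x => funext fun i => ?_⟩
  exact iterate_eq_of_noPath f n i (noPath_of_acyclic hf i) x (fun _ => 0)
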